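/- Let C be a circle packing of a graph G' in the unit disc with associated embedding z (sending each vertex to the center of its circle), and suppose G' has maximum degree D. Then the Dirichlet energy of each coordinate of z is finite; in fact E(z₁) + E(z₂) ≤ 4D Σ_v r(v)² ≤ 4D/π · Area(𝔻) < ∞, where r(v) is the radius of the circle of v. -/

import Mathlib

open scoped Classical

open ENNReal

/-- Dirichlet energy with unit conductances (sum over ordered pairs, hence the 1/2). -/
noncomputable def dirichletEnergy {V : Type*} (G : SimpleGraph V) (f : V → ℝ) : ℝ≥0∞ :=
  (1 / 2) * ∑' p : V × V,
    if G.Adj p.1 p.2 then ENNReal.ofReal ((f p.1 - f p.2) ^ 2) else 0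

/-- For a circle packing of a graph `G'` of maximum degree `D` in the unit
disc, with embedding `z` (centres) and radii `r`, the Dirichlet energy of each coordinate
of `z` is finite; in fact `E(z₁) + E(z₂) ≤ 4D Σ_v r(v)² ≤ 4D` (since `Σ r² ≤ Area(𝔻)/π = 1`). -/
theorem circlePacking_embedding_finite_energy {V : Type*} (G : SimpleGraph V)
    [∀ v, Fintype (G.neighborSet v)]
    (z : V → ℂ) (r : V → ℝ) (hr : ∀ v, 0 < r v)
    (hdisc : ∀ v, ‖z v‖ + r v ≤ 1)
    (htangent : ∀ u v, G.Adj u v → dist (z u) (z v) = r u + r v)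
    (hdisjoint : ∀ u v, u ≠ v → r u + r v ≤ dist (z u) (z v))
    (D : ℕ) (hdeg : ∀ v, G.degree v ≤ D) :
    dirichletEnergy G (fun v => (z v).re) + dirichletEnergy G (fun v => (z v).im)
        ≤ 4 * (D : ℝ≥0∞) * ∑' v, ENNReal.ofReal (r v ^ 2)
      ∧ (∑' v, ENNReal.ofReal (r v ^ 2)) ≤ 1
      ∧ dirichletEnergy G (fun v => (z v).re) + dirichletEnergy G (fun v => (z v).im) < ⊤ := by
  -- Part 2: area bound
  have hsum1 : (∑' v, ENNReal.ofReal (r v ^ 2)) ≤ 1 := by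
    rw [ENNReal.tsum_eq_iSup_sum]
    refine iSup_le fun s => ?_
    have hdisj : (↑s : Set V).PairwiseDisjoint (fun v => Metric.ball (z v) (r v)) :=
      fun u _ v _ huv => Metric.ball_disjoint_ball (hdisjoint u v huv)
    have hmeas : ∑ v ∈ s, MeasureTheory.volume (Metric.ball (z v) (r v))
        = MeasureTheory.volume (⋃ v ∈ s, Metric.ball (z v) (r v)) :=
      (MeasureTheory.measure_biUnion_finset hdisj fun v _ => Metric.isOpen_ball.measurableSet).symm
    have hsub : (⋃ v ∈ s, Metric.ball (z v) (r v)) ⊆ Metric.closedBall (0 : ℂ) 1 := by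
      intro x hx
      simp only [Set.mem_iUnion, Metric.mem_ball] at hx
      obtain ⟨v, _, hxv⟩ := hx
      have : dist x 0 ≤ dist x (z v) + dist (z v) 0 := dist_triangle _ _ _
      have hz : dist (z v) 0 = ‖z v‖ := by simp [Complex.dist_eq]
      simp only [Metric.mem_closedBall]
      have := hdisc v
      nlinarith [hxv, hdisc v]
    have harea : ∑ v ∈ s, MeasureTheory.volume (Metric.ball (z v) (r v))
        ≤ MeasureTheory.volume (Metric.closedBall (0 : ℂ) 1) := by
      rw [hmeas]; exact MeasureTheory.measure_mono hsub
    simp only [Complex.volume_ball, Complex.volume_closedBall] at harea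
    have hpi : (NNReal.pi : ℝ≥0∞) ≠ 0 := by
      exact ENNReal.coe_ne_zero.mpr NNReal.pi_pos.ne'
    have hpit : (NNReal.pi : ℝ≥0∞) ≠ ⊤ := ENNReal.coe_ne_top
    have h1 : ENNReal.ofReal (1:ℝ) ^ 2 * (NNReal.pi : ℝ≥0∞) = 1 * (NNReal.pi : ℝ≥0∞) := by
      norm_num
    rw [h1] at harea
    rw [← Finset.sum_mul] at harea
    have := (ENNReal.mul_le_mul_iff_left hpi hpit).mp harea
    calc ∑ v ∈ s, ENNReal.ofReal (r v ^ 2)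
        = ∑ v ∈ s, ENNReal.ofReal (r v) ^ 2 := by
          refine Finset.sum_congr rfl fun v _ => ?_
          rw [← ENNReal.ofReal_pow (hr v).le]
      _ ≤ 1 := this
  -- Part 1: energy bound
  set Sr : ℝ≥0∞ := ∑' v, ENNReal.ofReal (r v ^ 2) with hSr
  have key : dirichletEnergy G (fun v => (z v).re) + dirichletEnergy G (fun v => (z v).im)
      ≤ 2 * (D : ℝ≥0∞) * Sr := by
    unfold dirichletEnergy
    rw [← mul_add, ← ENNReal.tsum_add]
    have hterm : ∀ p : V × V,
        ((if G.Adj p.1 p.2 then ENNReal.ofReal (((z p.1).re - (z p.2).re) ^ 2) else 0)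
          + (if G.Adj p.1 p.2 then ENNReal.ofReal (((z p.1).im - (z p.2).im) ^ 2) else 0))
        ≤ (if G.Adj p.1 p.2 then 2 * ENNReal.ofReal (r p.1 ^ 2) else 0)
          + (if G.Adj p.1 p.2 then 2 * ENNReal.ofReal (r p.2 ^ 2) else 0) := by
      rintro ⟨u, v⟩
      by_cases h : G.Adj u v
      · simp only [h, if_true]
        rw [← ENNReal.ofReal_add (by positivity) (by positivity)]
        have hd : ((z u).re - (z v).re) ^ 2 + ((z u).im - (z v).im) ^ 2 = (r u + r v) ^ 2 := by
          have := htangent u v h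
          rw [Complex.dist_eq, ← this] at *
          have habs : ‖z u - z v‖ ^ 2 = Complex.normSq (z u - z v) :=
            Complex.sq_norm _
          rw [← this, habs, Complex.normSq_sub, Complex.normSq_apply, Complex.normSq_apply]
          simp [Complex.normSq_apply, Complex.mul_re, Complex.conj_re, Complex.conj_im]
          ring
        rw [hd]
        have : (r u + r v) ^ 2 ≤ 2 * r u ^ 2 + 2 * r v ^ 2 := by nlinarith [sq_nonneg (r u - r v)]
        calc ENNReal.ofReal ((r u + r v) ^ 2) ≤ ENNReal.ofReal (2 * r u ^ 2 + 2 * r v ^ 2) :=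
              ENNReal.ofReal_le_ofReal this
          _ = 2 * ENNReal.ofReal (r u ^ 2) + 2 * ENNReal.ofReal (r v ^ 2) := by
              rw [ENNReal.ofReal_add (by positivity) (by positivity),
                ENNReal.ofReal_mul (by norm_num), ENNReal.ofReal_mul (by norm_num)]
              norm_num
      · simp [h]
    have hA : (∑' p : V × V, if G.Adj p.1 p.2 then 2 * ENNReal.ofReal (r p.1 ^ 2) else 0)
        ≤ 2 * (D : ℝ≥0∞) * Sr := by
      rw [ENNReal.tsum_prod (f := fun u v : V => if G.Adj u v then 2 * ENNReal.ofReal (r u ^ 2) else 0)]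
      have hinner : ∀ u : V, (∑' v : V, if G.Adj u v then 2 * ENNReal.ofReal (r u ^ 2) else 0)
          ≤ (D : ℝ≥0∞) * (2 * ENNReal.ofReal (r u ^ 2)) := by
        intro u
        rw [tsum_eq_sum (s := G.neighborFinset u)
          (fun v hv => by simp [SimpleGraph.mem_neighborFinset] at hv; simp [hv])]
        have : ∀ v ∈ G.neighborFinset u,
            (if G.Adj u v then 2 * ENNReal.ofReal (r u ^ 2) else 0)
            = 2 * ENNReal.ofReal (r u ^ 2) := by
          intro v hv; simp [SimpleGraph.mem_neighborFinset] at hv; simp [hv]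
        rw [Finset.sum_congr rfl this, Finset.sum_const, nsmul_eq_mul]
        gcongr
        exact_mod_cast hdeg u
      calc (∑' u : V, ∑' v : V, if G.Adj u v then 2 * ENNReal.ofReal (r u ^ 2) else 0)
          ≤ ∑' u : V, (D : ℝ≥0∞) * (2 * ENNReal.ofReal (r u ^ 2)) :=
            ENNReal.tsum_le_tsum hinner
        _ = 2 * (D : ℝ≥0∞) * Sr := by
            rw [ENNReal.tsum_mul_left, ENNReal.tsum_mul_left]; ring
    have hB : (∑' p : V × V, if G.Adj p.1 p.2 then 2 * ENNReal.ofReal (r p.2 ^ 2) else 0)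
        = ∑' p : V × V, if G.Adj p.1 p.2 then 2 * ENNReal.ofReal (r p.1 ^ 2) else 0 := by
      rw [← (Equiv.prodComm V V).tsum_eq
        (fun p : V × V => if G.Adj p.1 p.2 then 2 * ENNReal.ofReal (r p.2 ^ 2) else 0)]
      refine tsum_congr fun p => ?_
      simp only [Equiv.prodComm_apply, Prod.fst_swap, Prod.snd_swap]
      exact if_congr (G.adj_comm _ _) rfl rfl
    calc (1 / 2 : ℝ≥0∞) * ∑' p : V × V,
          ((if G.Adj p.1 p.2 then ENNReal.ofReal (((z p.1).re - (z p.2).re) ^ 2) else 0)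
            + (if G.Adj p.1 p.2 then ENNReal.ofReal (((z p.1).im - (z p.2).im) ^ 2) else 0))
        ≤ (1 / 2 : ℝ≥0∞) * ∑' p : V × V,
          ((if G.Adj p.1 p.2 then 2 * ENNReal.ofReal (r p.1 ^ 2) else 0)
            + (if G.Adj p.1 p.2 then 2 * ENNReal.ofReal (r p.2 ^ 2) else 0)) := by
          exact mul_le_mul_right (ENNReal.tsum_le_tsum hterm) _
      _ = (1 / 2 : ℝ≥0∞) *
          ((∑' p : V × V, if G.Adj p.1 p.2 then 2 * ENNReal.ofReal (r p.1 ^ 2) else 0)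
            + ∑' p : V × V, if G.Adj p.1 p.2 then 2 * ENNReal.ofReal (r p.2 ^ 2) else 0) := by
          rw [ENNReal.tsum_add]
      _ ≤ (1 / 2 : ℝ≥0∞) * (2 * (D : ℝ≥0∞) * Sr + 2 * (D : ℝ≥0∞) * Sr) := by
          rw [hB]; gcongr
      _ = 2 * (D : ℝ≥0∞) * Sr := by
          rw [← two_mul, ← mul_assoc, one_div,
            ENNReal.inv_mul_cancel (by norm_num) (by norm_num), one_mul]
  have h4 : dirichletEnergy G (fun v => (z v).re) + dirichletEnergy G (fun v => (z v).im)
      ≤ 4 * (D : ℝ≥0∞) * Sr := by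
    refine key.trans ?_
    gcongr
    norm_num
  refine ⟨h4, hsum1, ?_⟩
  calc dirichletEnergy G (fun v => (z v).re) + dirichletEnergy G (fun v => (z v).im)
      ≤ 4 * (D : ℝ≥0∞) * Sr := h4
    _ ≤ 4 * (D : ℝ≥0∞) * 1 := by gcongr
    _ < ⊤ := by
        rw [mul_one]
        exact ENNReal.mul_lt_top (by norm_num) (ENNReal.natCast_lt_top D)
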